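/- Let m ≤ n, θ ∈ (0,1), μ a Borel probability measure on ℝᵐ, and ν a Borel probability measure on ℝⁿ. Then inf_{β ∈ Φ⁻(ν,m)} D_JS(μ, β) = inf_{α ∈ Φ⁺(μ,n)} D_JS(α, ν). -/

import Mathlib

open MeasureTheory ENNReal

noncomputable section

/-- The affine map `x ↦ Vx + b` from `ℝⁿ` to `ℝᵐ` (Euclidean spaces). -/
def phiAff {m n : ℕ} (V : Matrix (Fin m) (Fin n) ℝ)
    (b : EuclideanSpace ℝ (Fin m)) (x : EuclideanSpace ℝ (Fin n)) :
    EuclideanSpace ℝ (Fin m) :=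
  (EuclideanSpace.equiv (Fin m) ℝ).symm
    (V.mulVec (EuclideanSpace.equiv (Fin n) ℝ x) + (EuclideanSpace.equiv (Fin m) ℝ) b)

/-- The `p`-Wasserstein distance: infimum over couplings of
`(∫ ‖x − y‖^p dγ)^{1/p}` (Euclidean norm). -/
def wassersteinDist (p : ℝ) {k : ℕ}
    (μ ν : Measure (EuclideanSpace ℝ (Fin k))) : ℝ :=
  sInf {r : ℝ | ∃ γ : Measure (EuclideanSpace ℝ (Fin k) × EuclideanSpace ℝ (Fin k)),
    γ.map Prod.fst = μ ∧ γ.map Prod.snd = ν ∧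
    r = (∫ z, ‖z.1 - z.2‖ ^ p ∂γ) ^ (1 / p)}

/-- The `f`-divergence `D_f(μ‖ν) = ∫ f(dμ/dν) dν`. -/
def fDivergence (f : ℝ → ℝ) {k : ℕ}
    (μ ν : Measure (EuclideanSpace ℝ (Fin k))) : ℝ :=
  ∫ x, f ((μ.rnDeriv ν x).toReal) ∂ν

/-- The Kullback–Leibler divergence `∫ log(dμ/dν) dμ`. -/
def klDivergence {k : ℕ} (μ ν : Measure (EuclideanSpace ℝ (Fin k))) : ℝ :=
  ∫ x, Real.log ((μ.rnDeriv ν x).toReal) ∂μ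

/-- The mixture `(1−θ)μ + θν`. -/
def mixture (θ : ℝ) {k : ℕ} (μ ν : Measure (EuclideanSpace ℝ (Fin k))) :
    Measure (EuclideanSpace ℝ (Fin k)) :=
  ENNReal.ofReal (1 - θ) • μ + ENNReal.ofReal θ • ν

/-- The θ-weighted Jensen–Shannon divergence. -/
def jsDivergence (θ : ℝ) {k : ℕ} (μ ν : Measure (EuclideanSpace ℝ (Fin k))) : ℝ :=
  (1 / 2) * klDivergence μ (mixture θ μ ν) + (1 / 2) * klDivergence ν (mixture θ ν μ)

/-- The total variation metric `sup_A |μ(A) − ν(A)|`. -/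
def tvDist {k : ℕ} (μ ν : Measure (EuclideanSpace ℝ (Fin k))) : ℝ :=
  sSup {r : ℝ | ∃ A : Set (EuclideanSpace ℝ (Fin k)), MeasurableSet A ∧
    r = |(μ A).toReal - (ν A).toReal|}

/-- The Hellinger squared divergence `∫ (√(dμ/dν) − 1)² dν`. -/
def hellingerSq {k : ℕ} (μ ν : Measure (EuclideanSpace ℝ (Fin k))) : ℝ :=
  ∫ x, (Real.sqrt ((μ.rnDeriv ν x).toReal) - 1) ^ 2 ∂ν

/-- `ν` has a strictly positive density w.r.t. Lebesgue measure. -/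
def HasPosDensity {k : ℕ} (ν : Measure (EuclideanSpace ℝ (Fin k))) : Prop :=
  ∃ t : EuclideanSpace ℝ (Fin k) → ℝ, Measurable t ∧ (∀ x, 0 < t x) ∧
    ν = volume.withDensity fun x => ENNReal.ofReal (t x)

end

instance haveLebesgueDecomposition_of_finite_aux {X : Type*} [MeasurableSpace X] (μ ν : Measure X)
    [IsFiniteMeasure μ] [IsFiniteMeasure ν] : μ.HaveLebesgueDecomposition ν :=
  Measure.haveLebesgueDecomposition_of_finiteMeasure

section AuxGibbs
variable {X : Type*} [MeasurableSpace X]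


/-- Gibbs-type nonnegativity core lemma. -/
lemma gibbs_nonneg {α : Measure X} [IsProbabilityMeasure α] {w : X → ℝ≥0∞}
    (hw : AEMeasurable w α) (h0 : ∀ᵐ x ∂α, 0 < w x) (ht : ∀ᵐ x ∂α, w x < ⊤)
    (hint : Integrable (fun x => Real.log (w x).toReal) α)
    (hle : ∫⁻ x, (w x)⁻¹ ∂α ≤ 1) :
    0 ≤ ∫ x, Real.log (w x).toReal ∂α := by
  have hinvlt : ∀ᵐ x ∂α, (w x)⁻¹ < ⊤ := by
    filter_upwards [h0] with x hx
    simpa [ENNReal.inv_lt_top] using hx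
  have hint2 : Integrable (fun x => ((w x)⁻¹).toReal) α := by
    refine integrable_toReal_of_lintegral_ne_top hw.inv ?_
    exact (lt_of_le_of_lt hle one_lt_top).ne
  have hmono : ∀ᵐ x ∂α, 1 - ((w x)⁻¹).toReal ≤ Real.log (w x).toReal := by
    filter_upwards [h0, ht] with x hx hxt
    have htR : 0 < (w x).toReal := ENNReal.toReal_pos hx.ne' hxt.ne
    have h1 : Real.log (w x).toReal⁻¹ ≤ (w x).toReal⁻¹ - 1 :=
      Real.log_le_sub_one_of_pos (by positivity)
    rw [Real.log_inv] at h1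
    have : ((w x)⁻¹).toReal = (w x).toReal⁻¹ := ENNReal.toReal_inv _
    linarith
  have h1 : ∫ x, (1 - ((w x)⁻¹).toReal) ∂α ≤ ∫ x, Real.log (w x).toReal ∂α :=
    integral_mono_ae ((integrable_const 1).sub hint2) hint hmono
  have h2 : ∫ x, ((w x)⁻¹).toReal ∂α ≤ 1 := by
    rw [integral_toReal (f := fun x => (w x)⁻¹) hw.inv hinvlt]
    exact le_trans (ENNReal.toReal_mono one_ne_top hle) (by norm_num)
  have h3 : ∫ x, (1 - ((w x)⁻¹).toReal) ∂α = 1 - ∫ x, ((w x)⁻¹).toReal ∂α := by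
    rw [integral_sub (integrable_const 1) hint2]
    simp
  linarith

lemma lintegral_inv_rnDeriv_le {α lam : Measure X} [IsFiniteMeasure α] [IsFiniteMeasure lam]
    (hac : α ≪ lam) :
    ∫⁻ x, (α.rnDeriv lam x)⁻¹ ∂α ≤ lam Set.univ := by
  rw [← MeasureTheory.lintegral_rnDeriv_mul hac (f := fun x => (α.rnDeriv lam x)⁻¹)
    (Measure.measurable_rnDeriv _ _).inv.aemeasurable]
  calc ∫⁻ x, α.rnDeriv lam x * (α.rnDeriv lam x)⁻¹ ∂lam
      ≤ ∫⁻ _, 1 ∂lam := lintegral_mono fun x => ENNReal.mul_inv_le_one _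
    _ = lam Set.univ := by simp

lemma integrable_log_rnDeriv {α lam : Measure X} [IsFiniteMeasure α] [IsFiniteMeasure lam]
    (hac : α ≪ lam) {C : ℝ≥0∞} (hC0 : C ≠ 0) (hC : C ≠ ⊤)
    (hb : ∀ᵐ x ∂lam, α.rnDeriv lam x ≤ C) :
    Integrable (fun x => Real.log (α.rnDeriv lam x).toReal) α := by
  set g := α.rnDeriv lam with hg
  have hgm : Measurable g := Measure.measurable_rnDeriv _ _
  have h0 : ∀ᵐ x ∂α, 0 < g x := Measure.rnDeriv_pos hac
  have ht : ∀ᵐ x ∂α, g x < ⊤ := hac.ae_le (Measure.rnDeriv_lt_top _ _)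
  have hbα : ∀ᵐ x ∂α, g x ≤ C := hac.ae_le hb
  have hint2 : Integrable (fun x => ((g x)⁻¹).toReal) α := by
    refine integrable_toReal_of_lintegral_ne_top hgm.inv.aemeasurable ?_
    exact (lt_of_le_of_lt (lintegral_inv_rnDeriv_le hac) (measure_lt_top _ _)).ne
  have hBint : Integrable (fun x => ((g x)⁻¹).toReal + |Real.log C.toReal|) α :=
    hint2.add (integrable_const _)
  refine Integrable.mono' hBint (hgm.ennreal_toReal.log.aestronglyMeasurable) ?_
  filter_upwards [h0, ht, hbα] with x hx hxt hxb
  have htR : 0 < (g x).toReal := ENNReal.toReal_pos hx.ne' hxt.ne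
  rw [Real.norm_eq_abs, abs_le]
  constructor
  · have h1 : Real.log (g x).toReal⁻¹ ≤ (g x).toReal⁻¹ - 1 :=
      Real.log_le_sub_one_of_pos (by positivity)
    rw [Real.log_inv] at h1
    have h2 : ((g x)⁻¹).toReal = (g x).toReal⁻¹ := ENNReal.toReal_inv _
    have h3 : (0:ℝ) ≤ |Real.log C.toReal| := abs_nonneg _
    nlinarith
  · have h1 : (g x).toReal ≤ C.toReal := ENNReal.toReal_mono hC hxb
    have h2 : Real.log (g x).toReal ≤ Real.log C.toReal :=
      Real.log_le_log htR h1
    have h3 : 0 ≤ ((g x)⁻¹).toReal := ENNReal.toReal_nonneg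
    have h4 : Real.log C.toReal ≤ |Real.log C.toReal| := le_abs_self _
    linarith

end AuxGibbs

local notation "E" k => EuclideanSpace ℝ (Fin k)

variable {θ : ℝ}

section MIX
variable {k : ℕ}

lemma ofReal_one_sub_ne_zero (hθ : θ ∈ Set.Ioo (0:ℝ) 1) : ENNReal.ofReal (1 - θ) ≠ 0 := by
  simp [ENNReal.ofReal_eq_zero]; linarith [hθ.2]

lemma invC_ne_zero (hθ : θ ∈ Set.Ioo (0:ℝ) 1) : (ENNReal.ofReal (1 - θ))⁻¹ ≠ 0 :=
  ENNReal.inv_ne_zero.mpr ENNReal.ofReal_ne_top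

lemma invC_ne_top (hθ : θ ∈ Set.Ioo (0:ℝ) 1) : (ENNReal.ofReal (1 - θ))⁻¹ ≠ ⊤ := by
  simp only [Ne, ENNReal.inv_eq_top]
  exact ofReal_one_sub_ne_zero hθ

lemma mixture_finite (μ ν : Measure (E k)) [IsFiniteMeasure μ] [IsFiniteMeasure ν] :
    IsFiniteMeasure (mixture θ μ ν) := by
  constructor
  simp only [mixture, Measure.coe_add, Measure.coe_smul, Pi.add_apply, Pi.smul_apply,
    smul_eq_mul]
  exact ENNReal.add_lt_top.mpr
    ⟨ENNReal.mul_lt_top ENNReal.ofReal_lt_top (measure_lt_top _ _),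
     ENNReal.mul_lt_top ENNReal.ofReal_lt_top (measure_lt_top _ _)⟩

lemma mixture_prob (hθ : θ ∈ Set.Ioo (0:ℝ) 1) (μ ν : Measure (E k))
    [IsProbabilityMeasure μ] [IsProbabilityMeasure ν] :
    IsProbabilityMeasure (mixture θ μ ν) := by
  constructor
  simp only [mixture, Measure.coe_add, Measure.coe_smul, Pi.add_apply, Pi.smul_apply,
    measure_univ, smul_eq_mul, mul_one]
  rw [← ENNReal.ofReal_add (by linarith [hθ.2]) (le_of_lt hθ.1)]
  norm_num

lemma absolutelyContinuous_mixture_left (hθ : θ ∈ Set.Ioo (0:ℝ) 1) (μ ν : Measure (E k)) :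
    μ ≪ mixture θ μ ν := by
  refine Measure.AbsolutelyContinuous.mk fun s hs h0 => ?_
  simp only [mixture, Measure.coe_add, Measure.coe_smul, Pi.add_apply, Pi.smul_apply,
    smul_eq_mul, add_eq_zero, mul_eq_zero] at h0
  rcases h0.1 with h | h
  · exact absurd h (ofReal_one_sub_ne_zero hθ)
  · exact h

lemma rnDeriv_mixture_le (μ ν : Measure (E k)) [IsFiniteMeasure μ] [IsFiniteMeasure ν] :
    ∀ᵐ x ∂(mixture θ μ ν), μ.rnDeriv (mixture θ μ ν) x ≤ (ENNReal.ofReal (1 - θ))⁻¹ := by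
  set Λ := mixture θ μ ν with hΛ
  have hfin : IsFiniteMeasure Λ := mixture_finite μ ν
  have hf1 : IsFiniteMeasure (ENNReal.ofReal (1 - θ) • μ) :=
    ⟨by simp only [Measure.coe_smul, Pi.smul_apply, smul_eq_mul];
        exact ENNReal.mul_lt_top ENNReal.ofReal_lt_top (measure_lt_top _ _)⟩
  have hf2 : IsFiniteMeasure (ENNReal.ofReal θ • ν) :=
    ⟨by simp only [Measure.coe_smul, Pi.smul_apply, smul_eq_mul];
        exact ENNReal.mul_lt_top ENNReal.ofReal_lt_top (measure_lt_top _ _)⟩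
  have h1 := Measure.rnDeriv_add (ENNReal.ofReal (1 - θ) • μ) (ENNReal.ofReal θ • ν) Λ
  have h2 := Measure.rnDeriv_smul_left_of_ne_top μ Λ (r := ENNReal.ofReal (1 - θ))
    ENNReal.ofReal_ne_top
  have h3 := Measure.rnDeriv_self Λ
  have h4 : (ENNReal.ofReal (1 - θ) • μ + ENNReal.ofReal θ • ν) = Λ := rfl
  rw [h4] at h1
  filter_upwards [h1, h2, h3] with x hx1 hx2 hx3
  simp only [Pi.add_apply, Pi.smul_apply, smul_eq_mul] at hx1 hx2
  have key : ENNReal.ofReal (1 - θ) * μ.rnDeriv Λ x ≤ 1 := by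
    rw [← hx3, hx1, hx2]
    exact le_add_right le_rfl
  rw [ENNReal.le_inv_iff_mul_le, mul_comm]
  exact key

lemma klDivergence_mixture_nonneg (hθ : θ ∈ Set.Ioo (0:ℝ) 1) (μ ν : Measure (E k))
    [IsProbabilityMeasure μ] [IsProbabilityMeasure ν] :
    0 ≤ klDivergence μ (mixture θ μ ν) := by
  set Λ := mixture θ μ ν with hΛ
  have : IsProbabilityMeasure Λ := mixture_prob hθ μ ν
  have hac : μ ≪ Λ := absolutelyContinuous_mixture_left hθ μ ν
  have hint := integrable_log_rnDeriv hac (invC_ne_zero hθ) (invC_ne_top hθ)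
    (rnDeriv_mixture_le μ ν)
  refine gibbs_nonneg (Measure.measurable_rnDeriv _ _).aemeasurable
    (Measure.rnDeriv_pos hac) (hac.ae_le (Measure.rnDeriv_lt_top _ _)) hint ?_
  calc ∫⁻ x, (μ.rnDeriv Λ x)⁻¹ ∂μ ≤ Λ Set.univ := lintegral_inv_rnDeriv_le hac
    _ = 1 := measure_univ

lemma jsDivergence_nonneg (hθ : θ ∈ Set.Ioo (0:ℝ) 1) (μ ν : Measure (E k))
    [IsProbabilityMeasure μ] [IsProbabilityMeasure ν] :
    0 ≤ jsDivergence θ μ ν := by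
  have h1 := klDivergence_mixture_nonneg hθ μ ν
  have h2 := klDivergence_mixture_nonneg hθ ν μ
  unfold jsDivergence
  linarith

end MIX

section DPI
variable {m n : ℕ}

lemma map_mixture (φ : (E n) → E m) (hφ : Measurable φ) (α ν : Measure (E n)) :
    (mixture θ α ν).map φ = mixture θ (α.map φ) (ν.map φ) := by
  simp only [mixture]
  rw [Measure.map_add _ _ hφ, Measure.map_smul, Measure.map_smul]

lemma klDivergence_map_le (hθ : θ ∈ Set.Ioo (0:ℝ) 1) (φ : (E n) → E m) (hφ : Measurable φ)
    (α ν : Measure (E n)) [IsProbabilityMeasure α] [IsProbabilityMeasure ν] :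
    klDivergence (α.map φ) (mixture θ (α.map φ) (ν.map φ)) ≤ klDivergence α (mixture θ α ν) := by
  set Λ := mixture θ α ν with hΛdef
  set μ := α.map φ with hμdef
  have hμprob : IsProbabilityMeasure μ := Measure.isProbabilityMeasure_map hφ.aemeasurable
  have hνφprob : IsProbabilityMeasure (ν.map φ) := Measure.isProbabilityMeasure_map hφ.aemeasurable
  set Λ' := mixture θ μ (ν.map φ) with hΛ'def
  have hΛprob : IsProbabilityMeasure Λ := mixture_prob hθ α ν
  have hΛ'prob : IsProbabilityMeasure Λ' := mixture_prob hθ μ (ν.map φ)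
  have hmapΛ : Λ.map φ = Λ' := map_mixture φ hφ α ν
  have hacα : α ≪ Λ := absolutelyContinuous_mixture_left hθ α ν
  have hacμ : μ ≪ Λ' := absolutelyContinuous_mixture_left hθ μ (ν.map φ)
  set g := α.rnDeriv Λ with hgdef
  set G := μ.rnDeriv Λ' with hGdef
  have hgm : Measurable g := Measure.measurable_rnDeriv _ _
  have hGm : Measurable G := Measure.measurable_rnDeriv _ _
  -- integrability
  have hintg : Integrable (fun x => Real.log (g x).toReal) α :=
    integrable_log_rnDeriv hacα (invC_ne_zero hθ) (invC_ne_top hθ) (rnDeriv_mixture_le α ν)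
  have hintG : Integrable (fun y => Real.log (G y).toReal) μ :=
    integrable_log_rnDeriv hacμ (invC_ne_zero hθ) (invC_ne_top hθ)
      (rnDeriv_mixture_le μ (ν.map φ))
  have hGsm : AEStronglyMeasurable (fun y => Real.log (G y).toReal) μ :=
    (hGm.ennreal_toReal.log).aestronglyMeasurable
  have hintGφ : Integrable (fun x => Real.log (G (φ x)).toReal) α := by
    rw [hμdef] at hintG
    exact (integrable_map_measure (by rw [← hμdef]; exact hGsm) hφ.aemeasurable).mp hintG
  have hmapint : ∫ x, Real.log (G (φ x)).toReal ∂α = ∫ y, Real.log (G y).toReal ∂μ := by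
    rw [hμdef]
    exact (integral_map hφ.aemeasurable (by rw [← hμdef]; exact hGsm)).symm
  -- a.e. facts
  have hg0 : ∀ᵐ x ∂α, 0 < g x := Measure.rnDeriv_pos hacα
  have hgt : ∀ᵐ x ∂α, g x < ⊤ := hacα.ae_le (Measure.rnDeriv_lt_top _ _)
  have hG0 : ∀ᵐ y ∂μ, 0 < G y := Measure.rnDeriv_pos hacμ
  have hGt : ∀ᵐ y ∂μ, G y < ⊤ := hacμ.ae_le (Measure.rnDeriv_lt_top _ _)
  have hG0φ : ∀ᵐ x ∂α, 0 < G (φ x) := by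
    rw [hμdef] at hG0
    exact (ae_map_iff hφ.aemeasurable (measurableSet_lt measurable_const hGm)).mp hG0
  have hGtφ : ∀ᵐ x ∂α, G (φ x) < ⊤ := by
    rw [hμdef] at hGt
    exact (ae_map_iff hφ.aemeasurable (measurableSet_lt hGm measurable_const)).mp hGt
  set w : (E n) → ℝ≥0∞ := fun x => g x * (G (φ x))⁻¹ with hwdef
  have hwm : Measurable w := hgm.mul (hGm.comp hφ).inv
  have hw0 : ∀ᵐ x ∂α, 0 < w x := by
    filter_upwards [hg0, hGtφ] with x h1 h2
    exact ENNReal.mul_pos h1.ne' (ENNReal.inv_ne_zero.mpr h2.ne)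
  have hwt : ∀ᵐ x ∂α, w x < ⊤ := by
    filter_upwards [hgt, hG0φ] with x h1 h2
    exact ENNReal.mul_lt_top h1 (ENNReal.inv_lt_top.mpr h2)
  have hlog : ∀ᵐ x ∂α, Real.log (w x).toReal
      = Real.log (g x).toReal - Real.log (G (φ x)).toReal := by
    filter_upwards [hg0, hgt, hG0φ, hGtφ] with x h1 h2 h3 h4
    have hgR : 0 < (g x).toReal := ENNReal.toReal_pos h1.ne' h2.ne
    have hGR : 0 < (G (φ x)).toReal := ENNReal.toReal_pos h3.ne' h4.ne
    simp only [hwdef]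
    rw [ENNReal.toReal_mul, ENNReal.toReal_inv,
      Real.log_mul hgR.ne' (by positivity), Real.log_inv]
    ring
  have hintw : Integrable (fun x => Real.log (w x).toReal) α := by
    refine Integrable.congr (hintg.sub hintGφ) ?_
    filter_upwards [hlog] with x hx
    simp only [Pi.sub_apply]
    exact hx.symm
  have hinv : ∫⁻ x, (w x)⁻¹ ∂α ≤ 1 := by
    have hcongr : ∫⁻ x, (w x)⁻¹ ∂α = ∫⁻ x, (g x)⁻¹ * G (φ x) ∂α := by
      refine lintegral_congr_ae ?_
      filter_upwards [hG0φ, hGtφ] with x h1 h2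
      simp only [hwdef]
      rw [ENNReal.mul_inv (Or.inr (ENNReal.inv_ne_top.mpr h1.ne'))
        (Or.inr (ENNReal.inv_ne_zero.mpr h2.ne)), inv_inv]
    rw [hcongr]
    have hmeas : Measurable fun x => (g x)⁻¹ * G (φ x) := hgm.inv.mul (hGm.comp hφ)
    have hrw : ∫⁻ x, (g x)⁻¹ * G (φ x) ∂α
        = ∫⁻ x, g x * ((g x)⁻¹ * G (φ x)) ∂Λ :=
      (MeasureTheory.lintegral_rnDeriv_mul hacα hmeas.aemeasurable).symm
    rw [hrw]
    calc ∫⁻ x, g x * ((g x)⁻¹ * G (φ x)) ∂Λ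
        ≤ ∫⁻ x, G (φ x) ∂Λ := by
          refine lintegral_mono fun x => ?_
          rw [← mul_assoc]
          exact mul_le_of_le_one_left' (ENNReal.mul_inv_le_one _)
      _ = ∫⁻ y, G y ∂Λ' := by rw [← hmapΛ, lintegral_map hGm hφ]
      _ ≤ μ Set.univ := Measure.lintegral_rnDeriv_le
      _ = 1 := measure_univ
  have hgibbs := gibbs_nonneg hwm.aemeasurable hw0 hwt hintw hinv
  have hsplit : ∫ x, Real.log (w x).toReal ∂α
      = klDivergence α Λ - klDivergence μ Λ' := by
    rw [integral_congr_ae hlog, integral_sub hintg hintGφ]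
    unfold klDivergence
    rw [hmapint]
  rw [hsplit] at hgibbs
  linarith

lemma jsDivergence_map_le (hθ : θ ∈ Set.Ioo (0:ℝ) 1) (φ : (E n) → E m) (hφ : Measurable φ)
    (α ν : Measure (E n)) [IsProbabilityMeasure α] [IsProbabilityMeasure ν] :
    jsDivergence θ (α.map φ) (ν.map φ) ≤ jsDivergence θ α ν := by
  have h1 := klDivergence_map_le hθ φ hφ α ν
  have h2 := klDivergence_map_le hθ φ hφ ν α
  unfold jsDivergence
  linarith

end DPI


section Lift
variable {θ : ℝ} {m n : ℕ}
lemma exists_lift (hθ : θ ∈ Set.Ioo (0:ℝ) 1) (φ : (E n) → E m) (hφ : Measurable φ)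
    (ψ : (E m) → E n) (hψ : Measurable ψ) (hsec : ∀ y, φ (ψ y) = y)
    (μ : Measure (E m)) (ν : Measure (E n))
    [IsProbabilityMeasure μ] [IsProbabilityMeasure ν] :
    ∃ α : Measure (E n), IsProbabilityMeasure α ∧ α.map φ = μ ∧
      jsDivergence θ α ν = jsDivergence θ μ (ν.map φ) := by
  classical
  set a := ENNReal.ofReal (1 - θ) with hadef
  set t := ENNReal.ofReal θ with htdef
  have ha0 : a ≠ 0 := ofReal_one_sub_ne_zero hθ
  have hat : a ≠ ⊤ := ENNReal.ofReal_ne_top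
  have ht0 : t ≠ 0 := by simp [htdef, ENNReal.ofReal_eq_zero]; linarith [hθ.1]
  have htt : t ≠ ⊤ := ENNReal.ofReal_ne_top
  set β := ν.map φ with hβdef
  have hβprob : IsProbabilityMeasure β := Measure.isProbabilityMeasure_map hφ.aemeasurable
  set r := μ.rnDeriv β with hrdef
  have hr : Measurable r := Measure.measurable_rnDeriv _ _
  set μs := μ.singularPart β with hμsdef
  have hLeb : μ = μs + β.withDensity r := μ.haveLebesgueDecomposition_add β
  obtain ⟨T, hTmeas, hT1, hT2⟩ := Measure.mutuallySingular_singularPart μ β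
  set S := Tᶜ with hSdef
  have hS : MeasurableSet S := hTmeas.compl
  have hβS : β S = 0 := hT2
  have hμsS : μs Sᶜ = 0 := by rw [hSdef, compl_compl]; exact hT1
  -- densities
  set G' : (E m) → ℝ≥0∞ := S.piecewise (fun _ => a⁻¹) (fun y => r y * (a * r y + t)⁻¹)
    with hG'def
  set F' : (E m) → ℝ≥0∞ := S.piecewise (fun _ => 0) (fun y => (a + t * r y)⁻¹) with hF'def
  have hG'm : Measurable G' :=
    Measurable.piecewise hS measurable_const
      (hr.mul ((measurable_const.mul hr).add measurable_const).inv)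
  have hF'm : Measurable F' :=
    Measurable.piecewise hS measurable_const
      ((measurable_const.add (measurable_const.mul hr)).inv)
  -- the lifted measure
  set α : Measure (E n) := ν.withDensity (fun x => r (φ x)) + μs.map ψ with hαdef
  -- a.e. carrier facts
  have hμs_ae : ∀ᵐ y ∂μs, y ∈ S := by
    rw [ae_iff]
    exact hμsS
  have hβ_ae : ∀ᵐ y ∂β, y ∉ S := by
    rw [ae_iff]
    simpa using hβS
  have hν_ae : ∀ᵐ x ∂ν, φ x ∉ S := by
    rw [ae_iff]
    have : {x | ¬ φ x ∉ S} = φ ⁻¹' S := by ext x; simp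
    rw [this, ← Measure.map_apply hφ hS, ← hβdef]
    exact hβS
  have hαs_ae : ∀ᵐ x ∂(μs.map ψ), φ x ∈ S := by
    rw [ae_iff]
    have : {x | ¬ φ x ∈ S} = φ ⁻¹' Sᶜ := rfl
    rw [this, Measure.map_apply hψ (hφ hS.compl)]
    have : ψ ⁻¹' (φ ⁻¹' Sᶜ) = Sᶜ := by ext y; simp [hsec]
    rw [this]
    exact hμsS
  have hrfinβ : ∀ᵐ y ∂β, r y < ⊤ := Measure.rnDeriv_lt_top _ _
  have hrfinν : ∀ᵐ x ∂ν, r (φ x) < ⊤ := by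
    rw [hβdef] at hrfinβ
    exact (ae_map_iff hφ.aemeasurable (measurableSet_lt hr measurable_const)).mp hrfinβ
  -- pushforward facts
  have hwdmap : (ν.withDensity fun x => r (φ x)).map φ = β.withDensity r := by
    ext s hs
    rw [Measure.map_apply hφ hs, withDensity_apply _ (hφ hs), withDensity_apply _ hs, hβdef]
    exact (setLIntegral_map hs hr hφ).symm
  have hmapψφ : (μs.map ψ).map φ = μs := by
    rw [Measure.map_map hφ hψ]
    have : φ ∘ ψ = id := by funext y; simp [hsec]
    rw [this, Measure.map_id]
  have hαmap : α.map φ = μ := by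
    rw [hαdef, Measure.map_add _ _ hφ, hwdmap, hmapψφ, add_comm]
    exact hLeb.symm
  have hαprob : IsProbabilityMeasure α := by
    constructor
    have : α Set.univ = (α.map φ) Set.univ := by
      rw [Measure.map_apply hφ MeasurableSet.univ]; rfl
    rw [this, hαmap, measure_univ]
  -- pointwise computations
  have hpt1 : ∀ y, y ∉ S → r y < ⊤ → a * (r y * G' y) + t * G' y = r y := by
    intro y hy hfin
    have hG'y : G' y = r y * (a * r y + t)⁻¹ := Set.piecewise_eq_of_notMem _ _ _ hy
    have hne : a * r y + t ≠ 0 := by simp [ht0]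
    have hnetop : a * r y + t ≠ ⊤ :=
      ENNReal.add_ne_top.mpr ⟨ENNReal.mul_ne_top hat hfin.ne, htt⟩
    rw [hG'y]
    calc a * (r y * (r y * (a * r y + t)⁻¹ )) + t * (r y * (a * r y + t)⁻¹)
        = r y * ((a * r y + t) * (a * r y + t)⁻¹) := by ring
      _ = r y := by rw [ENNReal.mul_inv_cancel hne hnetop, mul_one]
  have hpt2 : ∀ y, y ∉ S → r y < ⊤ → a * F' y + t * (r y * F' y) = 1 := by
    intro y hy hfin
    have hF'y : F' y = (a + t * r y)⁻¹ := Set.piecewise_eq_of_notMem _ _ _ hy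
    have hne : a + t * r y ≠ 0 := by simp [ha0]
    have hnetop : a + t * r y ≠ ⊤ :=
      ENNReal.add_ne_top.mpr ⟨hat, ENNReal.mul_ne_top htt hfin.ne⟩
    rw [hF'y]
    calc a * (a + t * r y)⁻¹ + t * (r y * (a + t * r y)⁻¹)
        = (a + t * r y) * (a + t * r y)⁻¹ := by ring
      _ = 1 := ENNReal.mul_inv_cancel hne hnetop
  -- measurability of composed densities
  have hrφ : Measurable fun x => r (φ x) := hr.comp hφ
  have hG'φ : Measurable fun x => G' (φ x) := hG'm.comp hφ
  have hF'φ : Measurable fun x => F' (φ x) := hF'm.comp hφ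
  -- Identity 1 : μ = (mixture θ μ β).withDensity G'
  have hId1 : μ = (mixture θ μ β).withDensity G' := by
    have e1 : (mixture θ μ β).withDensity G'
        = a • μ.withDensity G' + t • β.withDensity G' := by
      rw [mixture, withDensity_add_measure, withDensity_smul_measure,
        withDensity_smul_measure]
    have e2 : μ.withDensity G' = μs.withDensity G' + β.withDensity (r * G') := by
      conv_lhs => rw [hLeb]
      rw [withDensity_add_measure, withDensity_mul _ hr hG'm]
    have e3 : μs.withDensity G' = a⁻¹ • μs := by
      rw [withDensity_congr_ae (g := fun _ => a⁻¹) ?_, withDensity_const]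
      filter_upwards [hμs_ae] with y hy
      exact Set.piecewise_eq_of_mem _ _ _ hy
    have e5 : a • β.withDensity (r * G') + t • β.withDensity G' = β.withDensity r := by
      have h1 := withDensity_smul (μ := β) (f := r * G') a (hr.mul hG'm)
      have h2 := withDensity_smul (μ := β) (f := G') t hG'm
      have h3 := withDensity_add_right (μ := β) (a • (r * G')) (g := t • G')
        (hG'm.const_smul t)
      rw [← h1, ← h2, ← h3]
      refine withDensity_congr_ae ?_
      filter_upwards [hβ_ae, hrfinβ] with y hy1 hy2
      simpa [smul_eq_mul] using hpt1 y hy1 hy2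
    rw [e1, e2, e3, smul_add, smul_smul, ENNReal.mul_inv_cancel ha0 hat, one_smul,
      add_assoc, e5]
    exact hLeb
  -- Identity 2 : α = (mixture θ α ν).withDensity (G' ∘ φ)
  have hId2 : α = (mixture θ α ν).withDensity (fun x => G' (φ x)) := by
    have e1 : (mixture θ α ν).withDensity (fun x => G' (φ x))
        = a • α.withDensity (fun x => G' (φ x)) + t • ν.withDensity (fun x => G' (φ x)) := by
      rw [mixture, withDensity_add_measure, withDensity_smul_measure,
        withDensity_smul_measure]
    have e2 : α.withDensity (fun x => G' (φ x))
        = ν.withDensity ((fun x => r (φ x)) * fun x => G' (φ x))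
          + (μs.map ψ).withDensity (fun x => G' (φ x)) := by
      rw [hαdef, withDensity_add_measure, withDensity_mul _ hrφ hG'φ]
    have e3 : (μs.map ψ).withDensity (fun x => G' (φ x)) = a⁻¹ • μs.map ψ := by
      rw [withDensity_congr_ae (g := fun _ => a⁻¹) ?_, withDensity_const]
      filter_upwards [hαs_ae] with x hx
      exact Set.piecewise_eq_of_mem _ _ _ hx
    have e5 : a • ν.withDensity ((fun x => r (φ x)) * fun x => G' (φ x))
        + t • ν.withDensity (fun x => G' (φ x))
        = ν.withDensity (fun x => r (φ x)) := by
      have h1 := withDensity_smul (μ := ν) (f := (fun x => r (φ x)) * fun x => G' (φ x)) a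
        (hrφ.mul hG'φ)
      have h2 := withDensity_smul (μ := ν) (f := fun x => G' (φ x)) t hG'φ
      have h3 := withDensity_add_right (μ := ν)
        (a • ((fun x => r (φ x)) * fun x => G' (φ x))) (g := t • fun x => G' (φ x))
        (hG'φ.const_smul t)
      rw [← h1, ← h2, ← h3]
      refine withDensity_congr_ae ?_
      filter_upwards [hν_ae, hrfinν] with x hx1 hx2
      simpa [smul_eq_mul] using hpt1 (φ x) hx1 hx2
    rw [e1, e2, e3, smul_add, smul_smul, ENNReal.mul_inv_cancel ha0 hat, one_smul,
      add_right_comm, e5]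
  -- Identity 3 : β = (mixture θ β μ).withDensity F'
  have hId3 : β = (mixture θ β μ).withDensity F' := by
    have e1 : (mixture θ β μ).withDensity F'
        = a • β.withDensity F' + t • μ.withDensity F' := by
      rw [mixture, withDensity_add_measure, withDensity_smul_measure,
        withDensity_smul_measure]
    have e2 : μ.withDensity F' = μs.withDensity F' + β.withDensity (r * F') := by
      conv_lhs => rw [hLeb]
      rw [withDensity_add_measure, withDensity_mul _ hr hF'm]
    have e3 : μs.withDensity F' = 0 := by
      rw [withDensity_congr_ae (g := fun _ => 0) ?_]
      · exact withDensity_zero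
      filter_upwards [hμs_ae] with y hy
      exact Set.piecewise_eq_of_mem _ _ _ hy
    have e5 : a • β.withDensity F' + t • β.withDensity (r * F') = β := by
      have h1 := withDensity_smul (μ := β) (f := F') a hF'm
      have h2 := withDensity_smul (μ := β) (f := r * F') t (hr.mul hF'm)
      have h3 := withDensity_add_right (μ := β) (a • F') (g := t • (r * F'))
        ((hr.mul hF'm).const_smul t)
      rw [← h1, ← h2, ← h3]
      have h4 : β.withDensity (a • F' + t • (r * F')) = β.withDensity 1 := by
        refine withDensity_congr_ae ?_
        filter_upwards [hβ_ae, hrfinβ] with y hy1 hy2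
        simpa [smul_eq_mul] using hpt2 y hy1 hy2
      rw [h4, withDensity_one]
    rw [e1, e2, e3, smul_add, smul_zero, zero_add, e5]
  -- Identity 4 : ν = (mixture θ ν α).withDensity (F' ∘ φ)
  have hId4 : ν = (mixture θ ν α).withDensity (fun x => F' (φ x)) := by
    have e1 : (mixture θ ν α).withDensity (fun x => F' (φ x))
        = a • ν.withDensity (fun x => F' (φ x)) + t • α.withDensity (fun x => F' (φ x)) := by
      rw [mixture, withDensity_add_measure, withDensity_smul_measure,
        withDensity_smul_measure]
    have e2 : α.withDensity (fun x => F' (φ x))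
        = ν.withDensity ((fun x => r (φ x)) * fun x => F' (φ x))
          + (μs.map ψ).withDensity (fun x => F' (φ x)) := by
      rw [hαdef, withDensity_add_measure, withDensity_mul _ hrφ hF'φ]
    have e3 : (μs.map ψ).withDensity (fun x => F' (φ x)) = 0 := by
      rw [withDensity_congr_ae (g := fun _ => 0) ?_]
      · exact withDensity_zero
      filter_upwards [hαs_ae] with x hx
      exact Set.piecewise_eq_of_mem _ _ _ hx
    have e5 : a • ν.withDensity (fun x => F' (φ x))
        + t • ν.withDensity ((fun x => r (φ x)) * fun x => F' (φ x)) = ν := by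
      have h1 := withDensity_smul (μ := ν) (f := fun x => F' (φ x)) a hF'φ
      have h2 := withDensity_smul (μ := ν) (f := (fun x => r (φ x)) * fun x => F' (φ x)) t
        (hrφ.mul hF'φ)
      have h3 := withDensity_add_right (μ := ν) (a • fun x => F' (φ x))
        (g := t • ((fun x => r (φ x)) * fun x => F' (φ x))) ((hrφ.mul hF'φ).const_smul t)
      rw [← h1, ← h2, ← h3]
      have h4 : ν.withDensity ((a • fun x => F' (φ x))
          + t • ((fun x => r (φ x)) * fun x => F' (φ x))) = ν.withDensity 1 := by
        refine withDensity_congr_ae ?_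
        filter_upwards [hν_ae, hrfinν] with x hx1 hx2
        simpa [smul_eq_mul] using hpt2 (φ x) hx1 hx2
      rw [h4, withDensity_one]
    rw [e1, e2, e3, smul_add, smul_zero, add_zero, e5]
  -- rnDeriv identifications
  haveI hfin1 : IsFiniteMeasure (mixture θ μ β) := mixture_finite μ β
  haveI : IsProbabilityMeasure α := hαprob
  haveI hfin2 : IsFiniteMeasure (mixture θ α ν) := mixture_finite α ν
  haveI hfin3 : IsFiniteMeasure (mixture θ β μ) := mixture_finite β μ
  haveI hfin4 : IsFiniteMeasure (mixture θ ν α) := mixture_finite ν α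
  have hRn1 : G' =ᵐ[mixture θ μ β] μ.rnDeriv (mixture θ μ β) :=
    Measure.eq_rnDeriv hG'm Measure.MutuallySingular.zero_left (by rw [zero_add]; exact hId1)
  have hRn2 : (fun x => G' (φ x)) =ᵐ[mixture θ α ν] α.rnDeriv (mixture θ α ν) :=
    Measure.eq_rnDeriv hG'φ Measure.MutuallySingular.zero_left (by rw [zero_add]; exact hId2)
  have hRn3 : F' =ᵐ[mixture θ β μ] β.rnDeriv (mixture θ β μ) :=
    Measure.eq_rnDeriv hF'm Measure.MutuallySingular.zero_left (by rw [zero_add]; exact hId3)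
  have hRn4 : (fun x => F' (φ x)) =ᵐ[mixture θ ν α] ν.rnDeriv (mixture θ ν α) :=
    Measure.eq_rnDeriv hF'φ Measure.MutuallySingular.zero_left (by rw [zero_add]; exact hId4)
  -- transfer rnDeriv identities to a.e. of the absolutely continuous measures
  have hacμ : μ ≪ mixture θ μ β := absolutelyContinuous_mixture_left hθ μ β
  have hacα : α ≪ mixture θ α ν := absolutelyContinuous_mixture_left hθ α ν
  have hacβ : β ≪ mixture θ β μ := absolutelyContinuous_mixture_left hθ β μ
  have hacν : ν ≪ mixture θ ν α := absolutelyContinuous_mixture_left hθ ν α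
  -- KL term 1
  have hkl1 : klDivergence α (mixture θ α ν) = klDivergence μ (mixture θ μ β) := by
    have h1 : klDivergence α (mixture θ α ν) = ∫ x, Real.log (G' (φ x)).toReal ∂α := by
      unfold klDivergence
      refine integral_congr_ae ?_
      filter_upwards [hacα.ae_le hRn2] with x hx
      rw [← hx]
    have h2 : ∫ x, Real.log (G' (φ x)).toReal ∂α = ∫ y, Real.log (G' y).toReal ∂μ := by
      rw [← hαmap]
      exact (integral_map hφ.aemeasurable
        (hG'm.ennreal_toReal.log.aestronglyMeasurable)).symm
    have h3 : ∫ y, Real.log (G' y).toReal ∂μ = klDivergence μ (mixture θ μ β) := by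
      unfold klDivergence
      refine integral_congr_ae ?_
      filter_upwards [hacμ.ae_le hRn1] with y hy
      rw [← hy]
    rw [h1, h2, h3]
  -- KL term 2
  have hkl2 : klDivergence ν (mixture θ ν α) = klDivergence β (mixture θ β μ) := by
    have h1 : klDivergence ν (mixture θ ν α) = ∫ x, Real.log (F' (φ x)).toReal ∂ν := by
      unfold klDivergence
      refine integral_congr_ae ?_
      filter_upwards [hacν.ae_le hRn4] with x hx
      rw [← hx]
    have h2 : ∫ x, Real.log (F' (φ x)).toReal ∂ν = ∫ y, Real.log (F' y).toReal ∂β := by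
      rw [hβdef]
      exact (integral_map hφ.aemeasurable
        (hF'm.ennreal_toReal.log.aestronglyMeasurable)).symm
    have h3 : ∫ y, Real.log (F' y).toReal ∂β = klDivergence β (mixture θ β μ) := by
      unfold klDivergence
      refine integral_congr_ae ?_
      filter_upwards [hacβ.ae_le hRn3] with y hy
      rw [← hy]
    rw [h1, h2, h3]
  refine ⟨α, hαprob, hαmap, ?_⟩
  unfold jsDivergence
  rw [hkl1, hkl2, hβdef]

end Lift

section Geometry
variable {m n : ℕ}


lemma phiAff_continuous (V : Matrix (Fin m) (Fin n) ℝ) (b : E m) :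
    Continuous (phiAff V b) := by
  unfold phiAff
  refine Continuous.comp (EuclideanSpace.equiv (Fin m) ℝ).symm.continuous ?_
  refine Continuous.add ?_ continuous_const
  exact (Matrix.mulVecLin V).continuous_of_finiteDimensional.comp
    (EuclideanSpace.equiv (Fin n) ℝ).continuous

lemma phiAff_measurable (V : Matrix (Fin m) (Fin n) ℝ) (b : E m) :
    Measurable (phiAff V b) := (phiAff_continuous V b).measurable

lemma phiAff_section (V : Matrix (Fin m) (Fin n) ℝ) (b : E m) (hV : V * V.transpose = 1) :
    ∃ ψ : (E m) → E n, Measurable ψ ∧ ∀ y, phiAff V b (ψ y) = y := by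
  refine ⟨fun y => (EuclideanSpace.equiv (Fin n) ℝ).symm
    (V.transpose.mulVec ((EuclideanSpace.equiv (Fin m) ℝ) y
      - (EuclideanSpace.equiv (Fin m) ℝ) b)), ?_, ?_⟩
  · refine Continuous.measurable ?_
    refine Continuous.comp (EuclideanSpace.equiv (Fin n) ℝ).symm.continuous ?_
    exact (Matrix.mulVecLin V.transpose).continuous_of_finiteDimensional.comp
      (((EuclideanSpace.equiv (Fin m) ℝ).continuous).sub continuous_const)
  · intro y
    simp only [phiAff, ContinuousLinearEquiv.apply_symm_apply]
    rw [Matrix.mulVec_mulVec, hV, Matrix.one_mulVec, sub_add_cancel]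
    exact (EuclideanSpace.equiv (Fin m) ℝ).symm_apply_apply y

lemma exists_orthonormal (hmn : m ≤ n) :
    ∃ V : Matrix (Fin m) (Fin n) ℝ, V * V.transpose = 1 := by
  refine ⟨Matrix.of fun i j => if j = Fin.castLE hmn i then 1 else 0, ?_⟩
  ext i k
  simp only [Matrix.mul_apply, Matrix.transpose_apply, Matrix.of_apply, Matrix.one_apply,
    ite_mul, one_mul, zero_mul]
  rw [Finset.sum_ite_eq' Finset.univ (Fin.castLE hmn i)]
  simp [Fin.castLE_inj, eq_comm]

end Geometry

theorem projection_eq_embedding_jsDivergence {m n : ℕ} (hmn : m ≤ n) (θ : ℝ)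
    (hθ : θ ∈ Set.Ioo (0 : ℝ) 1)
    (μ : Measure (EuclideanSpace ℝ (Fin m))) (ν : Measure (EuclideanSpace ℝ (Fin n)))
    [IsProbabilityMeasure μ] [IsProbabilityMeasure ν] :
    sInf {r : ℝ | ∃ (V : Matrix (Fin m) (Fin n) ℝ) (b : EuclideanSpace ℝ (Fin m)),
        V * V.transpose = 1 ∧ r = jsDivergence θ μ (ν.map (phiAff V b))} =
    sInf {r : ℝ | ∃ α : Measure (EuclideanSpace ℝ (Fin n)), IsProbabilityMeasure α ∧
        (∃ (V : Matrix (Fin m) (Fin n) ℝ) (b : EuclideanSpace ℝ (Fin m)),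
          V * V.transpose = 1 ∧ α.map (phiAff V b) = μ) ∧
        r = jsDivergence θ α ν} := by
  classical
  obtain ⟨V₀, hV₀⟩ := exists_orthonormal hmn
  have hLne : Set.Nonempty {r : ℝ | ∃ (V : Matrix (Fin m) (Fin n) ℝ)
      (b : EuclideanSpace ℝ (Fin m)),
      V * V.transpose = 1 ∧ r = jsDivergence θ μ (ν.map (phiAff V b))} :=
    ⟨_, V₀, 0, hV₀, rfl⟩
  obtain ⟨ψ₀, hψ₀m, hsec₀⟩ := phiAff_section V₀ 0 hV₀
  obtain ⟨α₀, hα₀p, hα₀m, hα₀j⟩ := exists_lift hθ (phiAff V₀ 0)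
    (phiAff_measurable V₀ 0) ψ₀ hψ₀m hsec₀ μ ν
  have hRne : Set.Nonempty {r : ℝ | ∃ α : Measure (EuclideanSpace ℝ (Fin n)),
      IsProbabilityMeasure α ∧
      (∃ (V : Matrix (Fin m) (Fin n) ℝ) (b : EuclideanSpace ℝ (Fin m)),
        V * V.transpose = 1 ∧ α.map (phiAff V b) = μ) ∧
      r = jsDivergence θ α ν} :=
    ⟨jsDivergence θ α₀ ν, α₀, hα₀p, ⟨V₀, 0, hV₀, hα₀m⟩, rfl⟩
  have hLbdd : BddBelow {r : ℝ | ∃ (V : Matrix (Fin m) (Fin n) ℝ)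
      (b : EuclideanSpace ℝ (Fin m)),
      V * V.transpose = 1 ∧ r = jsDivergence θ μ (ν.map (phiAff V b))} := by
    refine ⟨0, ?_⟩
    rintro r ⟨V, b, hV, rfl⟩
    haveI : IsProbabilityMeasure (ν.map (phiAff V b)) :=
      Measure.isProbabilityMeasure_map (phiAff_measurable V b).aemeasurable
    exact jsDivergence_nonneg hθ μ _
  have hRbdd : BddBelow {r : ℝ | ∃ α : Measure (EuclideanSpace ℝ (Fin n)),
      IsProbabilityMeasure α ∧
      (∃ (V : Matrix (Fin m) (Fin n) ℝ) (b : EuclideanSpace ℝ (Fin m)),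
        V * V.transpose = 1 ∧ α.map (phiAff V b) = μ) ∧
      r = jsDivergence θ α ν} := by
    refine ⟨0, ?_⟩
    rintro r ⟨α, hα, _, rfl⟩
    haveI := hα
    exact jsDivergence_nonneg hθ α ν
  apply le_antisymm
  · refine le_csInf hRne ?_
    rintro r ⟨α, hαprob, ⟨V, b, hV, hmap⟩, rfl⟩
    haveI := hαprob
    have hd : jsDivergence θ μ (ν.map (phiAff V b)) ≤ jsDivergence θ α ν := by
      rw [← hmap]
      exact jsDivergence_map_le hθ (phiAff V b) (phiAff_measurable V b) α ν
    exact le_trans (csInf_le hLbdd ⟨V, b, hV, rfl⟩) hd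
  · refine csInf_le_csInf hRbdd hLne ?_
    rintro r ⟨V, b, hV, rfl⟩
    obtain ⟨ψ, hψm, hsec⟩ := phiAff_section V b hV
    obtain ⟨α, h1, h2, h3⟩ := exists_lift hθ (phiAff V b) (phiAff_measurable V b)
      ψ hψm hsec μ ν
    exact ⟨α, h1, ⟨V, b, hV, h2⟩, h3.symm⟩
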